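/- Under the hypotheses of the enlarged 2-mCH system in the x-variable (f_x = f/2 + zmg, g_x = znf - g/2, p_x = -z²nf²), the function s = εzf²/(1 - εp) satisfies s_xx = s_x²/(2s) - z(ns²)_x + (m_x/m)(s_x + zns² - s) - (z²/2)n²s³ + (2z²mn + 1/2)s, wherever s ≠ 0 and m ≠ 0. -/

import Mathlib

theorem stmt_17 (f g p m n s : ℝ → ℝ) (z ε : ℝ)
    (hmdiff : Differentiable ℝ m) (hndiff : Differentiable ℝ n)
    (hf : ∀ x, HasDerivAt f (f x / 2 + z * m x * g x) x)
    (hg : ∀ x, HasDerivAt g (z * n x * f x - g x / 2) x)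
    (hp : ∀ x, HasDerivAt p (-z^2 * n x * (f x)^2) x)
    (hs : s = fun x => ε * z * (f x)^2 / (1 - ε * p x))
    (hden : ∀ x, 1 - ε * p x ≠ 0) (hfne : ∀ x, f x ≠ 0) :
    ∀ x : ℝ, s x ≠ 0 → m x ≠ 0 →
      deriv (deriv s) x
        = (deriv s x)^2 / (2 * s x)
          - z * deriv (fun y => n y * (s y)^2) x
          + deriv m x / m x * (deriv s x + z * n x * (s x)^2 - s x)
          - z^2/2 * (n x)^2 * (s x)^3
          + (2 * z^2 * m x * n x + 1/2) * s x := by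
  -- first derivative of s
  have hs1 : ∀ x, HasDerivAt s
      (s x + 2*z*m x*g x*s x/f x - z*n x*(s x)^2) x := by
    intro x
    have hnum : HasDerivAt (fun y => ε * z * (f y)^2)
        (ε * z * (2 * f x ^ 1 * (f x / 2 + z * m x * g x))) x :=
      ((hf x).pow 2).const_mul (ε * z)
    have hD : HasDerivAt (fun y => 1 - ε * p y)
        (0 - ε * (-z^2 * n x * (f x)^2)) x :=
      (hasDerivAt_const x 1).sub ((hp x).const_mul ε)
    have h : HasDerivAt (fun y => ε * z * (f y)^2 / (1 - ε * p y)) _ x := hnum.div hD (hden x)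
    rw [hs]
    convert h using 1
    beta_reduce
    field_simp [hden x, hfne x]
    ring
  have hsderiv : deriv s = fun x => s x + 2*z*m x*g x*s x/f x - z*n x*(s x)^2 :=
    funext fun x => (hs1 x).deriv
  intro x hs0 hm0
  -- second derivative
  have h2 : HasDerivAt (fun y => 2*z*m y*g y*s y/f y)
      (((((2*z)*deriv m x * g x + 2*z*m x * (z * n x * f x - g x / 2)) * s x
        + 2*z*m x*g x * (s x + 2*z*m x*g x*s x/f x - z*n x*(s x)^2)) * f x
        - 2*z*m x*g x*s x * (f x / 2 + z * m x * g x)) / (f x)^2) x :=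
    (((((hmdiff x).hasDerivAt.const_mul (2*z)).mul (hg x)).mul (hs1 x)).div
      (hf x) (hfne x))
  have h3 : HasDerivAt (fun y => z*n y*(s y)^2)
      (z * deriv n x * (s x)^2
        + z * n x * ((2:ℕ) * s x ^ 1 * (s x + 2*z*m x*g x*s x/f x - z*n x*(s x)^2))) x :=
    (((hndiff x).hasDerivAt.const_mul z).mul ((hs1 x).pow 2))
  have hsnd := ((hs1 x).add h2).sub h3
  have hns : deriv (fun y => n y * (s y)^2)
      x = deriv n x * (s x)^2
        + n x * ((2:ℕ) * s x ^ 1 * (s x + 2*z*m x*g x*s x/f x - z*n x*(s x)^2)) :=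
    ((hndiff x).hasDerivAt.mul ((hs1 x).pow 2)).deriv
  rw [hns, hsderiv]
  rw [show deriv (fun x => s x + 2*z*m x*g x*s x/f x - z*n x*(s x)^2) x = _ from hsnd.deriv]
  have hfx := hfne x
  field_simp [hden x, hfne x, hs0, hm0]
  ring
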